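/- arXiv:2505.03955 — 3 statements merged into one kernel-verified Lean document; each statement's English description precedes it below -/
import Mathlib

section
/- Let S be a real m × n matrix, let W be a symmetric positive definite real n × n matrix such that S W⁻¹ Sᵀ is invertible, let ŷ ∈ ℝⁿ and b ∈ ℝᵐ. Then the vector ỹ = ŷ − W⁻¹ Sᵀ (S W⁻¹ Sᵀ)⁻¹ (S ŷ − b) is the unique minimizer of the quadratic loss Q(y) = (y − ŷ)ᵀ W (y − ŷ) over the affine set {y ∈ ℝⁿ : S y = b}; that is, S ỹ = b, and Q(ỹ) < Q(y) for every y ≠ ỹ with S y = b. -/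
open Matrix

lemma mint_aux {m n : ℕ} (S : Matrix (Fin m) (Fin n) ℝ) (W : Matrix (Fin n) (Fin n) ℝ)
    (hInv : IsUnit (S * W⁻¹ * Sᵀ)) :
    S * (W⁻¹ * Sᵀ * (S * W⁻¹ * Sᵀ)⁻¹) = 1 := by
  have h : S * (W⁻¹ * Sᵀ * (S * W⁻¹ * Sᵀ)⁻¹) = (S * W⁻¹ * Sᵀ) * (S * W⁻¹ * Sᵀ)⁻¹ := by
    simp only [Matrix.mul_assoc]
  rw [h, Matrix.mul_nonsing_inv _ ((Matrix.isUnit_iff_isUnit_det _).mp hInv)]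

/-- For an `m × n` real matrix `S`, a symmetric positive definite `n × n`
matrix `W` with `S W⁻¹ Sᵀ` invertible, base forecast `yhat` and targets `b`, the vector
`ytilde = yhat − W⁻¹ Sᵀ (S W⁻¹ Sᵀ)⁻¹ (S yhat − b)` is the unique minimizer of the
quadratic loss `Q y = (y − yhat)ᵀ W (y − yhat)` over `{y : S y = b}`: it is feasible
and strictly beats every other feasible point. -/
theorem mint_closed_form_unique_minimizer
    {m n : ℕ} (S : Matrix (Fin m) (Fin n) ℝ) (W : Matrix (Fin n) (Fin n) ℝ)
    (hWsymm : W.IsSymm) (hWpd : W.PosDef)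
    (hInv : IsUnit (S * W⁻¹ * Sᵀ))
    (yhat : Fin n → ℝ) (b : Fin m → ℝ) :
    S *ᵥ (yhat - (W⁻¹ * Sᵀ * (S * W⁻¹ * Sᵀ)⁻¹) *ᵥ (S *ᵥ yhat - b)) = b ∧
    ∀ y : Fin n → ℝ, S *ᵥ y = b →
      y ≠ yhat - (W⁻¹ * Sᵀ * (S * W⁻¹ * Sᵀ)⁻¹) *ᵥ (S *ᵥ yhat - b) →
      ((yhat - (W⁻¹ * Sᵀ * (S * W⁻¹ * Sᵀ)⁻¹) *ᵥ (S *ᵥ yhat - b)) - yhat) ⬝ᵥ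
          (W *ᵥ ((yhat - (W⁻¹ * Sᵀ * (S * W⁻¹ * Sᵀ)⁻¹) *ᵥ (S *ᵥ yhat - b)) - yhat)) <
        (y - yhat) ⬝ᵥ (W *ᵥ (y - yhat)) := by
  set A := W⁻¹ * Sᵀ * (S * W⁻¹ * Sᵀ)⁻¹ with hA
  set r := S *ᵥ yhat - b with hr
  set yt := yhat - A *ᵥ r with hyt
  have hSA : S * A = 1 := mint_aux S W hInv
  have hfeas : S *ᵥ yt = b := by
    rw [hyt, Matrix.mulVec_sub, Matrix.mulVec_mulVec, hSA, Matrix.one_mulVec, hr]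
    abel
  refine ⟨hfeas, fun y hy hne => ?_⟩
  set d := y - yt with hd
  have hdne : d ≠ 0 := sub_ne_zero.mpr hne
  have hSd : S *ᵥ d = 0 := by
    rw [hd, Matrix.mulVec_sub, hy, hfeas, sub_self]
  have hWA : W * A = Sᵀ * (S * W⁻¹ * Sᵀ)⁻¹ := by
    rw [hA]
    simp only [← Matrix.mul_assoc]
    rw [Matrix.mul_nonsing_inv _ ((Matrix.isUnit_iff_isUnit_det _).mp hWpd.isUnit),
      Matrix.one_mul]
  have hcross : d ⬝ᵥ (W *ᵥ (yt - yhat)) = 0 := by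
    have h1 : yt - yhat = -(A *ᵥ r) := by rw [hyt]; abel
    rw [h1, Matrix.mulVec_neg, dotProduct_neg, Matrix.mulVec_mulVec, hWA,
      ← Matrix.mulVec_mulVec, Matrix.dotProduct_mulVec, Matrix.vecMul_transpose, hSd,
      zero_dotProduct, neg_zero]
  have hcross' : (yt - yhat) ⬝ᵥ (W *ᵥ d) = 0 := by
    have h2 := Matrix.vecMul_transpose W (yt - yhat)
    rw [hWsymm.eq] at h2
    rw [Matrix.dotProduct_mulVec, h2, dotProduct_comm]
    exact hcross
  have hdpos : 0 < d ⬝ᵥ (W *ᵥ d) := hWpd.dotProduct_mulVec_pos hdne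
  have hexp : y - yhat = d + (yt - yhat) := by rw [hd]; abel
  rw [hexp, Matrix.mulVec_add, dotProduct_add, add_dotProduct, add_dotProduct]
  rw [hcross, hcross']
  linarith
end

section
/- Let I be a finite set, F ⊆ I a nonempty subset, a : I → ℝ, c ∈ ℝ, and p > 1 a real number. Let Δ = c − ∑_{j ∈ F} a_j. Then the function x ↦ ∑_{i ∈ I} |x_i − a_i|^p has a unique minimizer over the affine set {x : I → ℝ | ∑_{i ∈ F} x_i = c}, given by x*_i = a_i + Δ/|F| for i ∈ F and x*_i = a_i for i ∉ F. -/
open Set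

lemma strictConvexOn_abs_rpow {p : ℝ} (hp : 1 < p) :
    StrictConvexOn ℝ univ (fun t : ℝ => |t| ^ p) := by
  have hp0 : 0 < p := lt_trans one_pos hp
  refine ⟨convex_univ, ?_⟩
  intro x _ y _ hxy a b ha hb hab
  simp only [smul_eq_mul]
  have habs : |a * x + b * y| ≤ a * |x| + b * |y| := by
    calc |a * x + b * y| ≤ |a * x| + |b * y| := abs_add_le _ _
    _ = a * |x| + b * |y| := by rw [abs_mul, abs_mul, abs_of_pos ha, abs_of_pos hb]
  by_cases h : |x| = |y|
  · have hxy' : x = -y := by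
      rcases abs_eq_abs.mp h with h' | h'
      · exact absurd h' hxy
      · exact h'
    have hy0 : y ≠ 0 := by
      rintro rfl
      simp [hxy'] at hxy
    have habs' : |y| > 0 := abs_pos.mpr hy0
    have hlt : |a * x + b * y| < |y| := by
      have : a * x + b * y = (b - a) * y := by rw [hxy']; ring
      rw [this, abs_mul]
      have : |b - a| < 1 := by
        rw [abs_lt]
        constructor <;> nlinarith
      nlinarith
    calc |a * x + b * y| ^ p < |y| ^ p :=
          Real.rpow_lt_rpow (abs_nonneg _) hlt hp0
    _ = a * |x| ^ p + b * |y| ^ p := by rw [h]; nlinarith [Real.rpow_nonneg (abs_nonneg y) p]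
  · have h1 : |a * x + b * y| ^ p ≤ (a * |x| + b * |y|) ^ p :=
      Real.rpow_le_rpow (abs_nonneg _) habs hp0.le
    have h2 := (strictConvexOn_rpow hp).2 (mem_Ici.mpr (abs_nonneg x))
      (mem_Ici.mpr (abs_nonneg y)) h ha hb hab
    simp only [smul_eq_mul] at h2
    linarith

/-- The incremental update: distribute the mismatch `Δ = c − ∑_{j ∈ F} a j` equally
over the affected indices `F`, leaving the others unchanged. -/
noncomputable def incrementalUpdate {I : Type*} [DecidableEq I]
    (F : Finset I) (a : I → ℝ) (c : ℝ) : I → ℝ :=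
  fun i => if i ∈ F then a i + (c - ∑ j ∈ F, a j) / F.card else a i

/-- For a finite index set `I`, nonempty `F ⊆ I`, `a : I → ℝ`, `c ∈ ℝ`
and real `p > 1`, the map `x ↦ ∑ i, |x i − a i| ^ p` has a unique minimizer over
`{x : ∑_{i ∈ F} x i = c}`, namely `x* i = a i + Δ/|F|` on `F` and `x* i = a i`
otherwise, where `Δ = c − ∑_{j ∈ F} a j`. -/
theorem incremental_update_unique_lp_minimizer
    {I : Type*} [Fintype I] [DecidableEq I]
    (F : Finset I) (hF : F.Nonempty) (a : I → ℝ) (c : ℝ) (p : ℝ) (hp : 1 < p) :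
    (∑ i ∈ F, incrementalUpdate F a c i = c) ∧
    (∀ y : I → ℝ, (∑ i ∈ F, y i = c) →
        (∑ i, |incrementalUpdate F a c i - a i| ^ p) ≤ ∑ i, |y i - a i| ^ p) ∧
    (∀ x : I → ℝ, (∑ i ∈ F, x i = c) →
        (∀ y : I → ℝ, (∑ i ∈ F, y i = c) →
            (∑ i, |x i - a i| ^ p) ≤ ∑ i, |y i - a i| ^ p) →
        x = incrementalUpdate F a c) := by
  have hp0 : 0 < p := lt_trans one_pos hp
  set n : ℝ := (F.card : ℝ) with hn_def
  have hn : 0 < n := by rw [hn_def]; exact_mod_cast Finset.card_pos.mpr hF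
  set Δ : ℝ := c - ∑ j ∈ F, a j with hΔ_def
  set m : ℝ := Δ / n with hm_def
  have hw1 : ∑ _i ∈ F, n⁻¹ = 1 := by
    rw [Finset.sum_const, nsmul_eq_mul]
    field_simp
    exact hn_def.symm
  -- Part 1: constraint satisfied
  have part1 : ∑ i ∈ F, incrementalUpdate F a c i = c := by
    have : ∑ i ∈ F, incrementalUpdate F a c i = ∑ i ∈ F, (a i + m) := by
      apply Finset.sum_congr rfl
      intro i hi
      simp [incrementalUpdate, hi]
      rfl
    rw [this, Finset.sum_add_distrib, Finset.sum_const, nsmul_eq_mul, hm_def]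
    rw [mul_div_cancel₀ _ (ne_of_gt hn)]
    simp [hΔ_def]
  -- objective of x* equals n * |m|^p
  have obj_star : (∑ i, |incrementalUpdate F a c i - a i| ^ p) = n * |m| ^ p := by
    rw [← Finset.sum_subset (Finset.subset_univ F)
      (by
        intro i _ hi
        simp [incrementalUpdate, hi, Real.zero_rpow (ne_of_gt hp0)])]
    have : ∀ i ∈ F, |incrementalUpdate F a c i - a i| ^ p = |m| ^ p := by
      intro i hi
      simp [incrementalUpdate, hi]
      rfl
    rw [Finset.sum_congr rfl this, Finset.sum_const, nsmul_eq_mul]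
  -- Jensen lower bound on F
  have key2 : ∀ y : I → ℝ, (∑ i ∈ F, y i = c) →
      n * |m| ^ p ≤ ∑ i ∈ F, |y i - a i| ^ p := by
    intro y hy
    have hmem : ∀ i ∈ F, y i - a i ∈ (univ : Set ℝ) := fun i _ => mem_univ _
    have hj := (strictConvexOn_abs_rpow hp).convexOn.map_sum_le
      (t := F) (w := fun _ => n⁻¹) (p := fun i => y i - a i)
      (fun i _ => by positivity) hw1 hmem
    simp only [smul_eq_mul] at hj
    have hsum : ∑ i ∈ F, n⁻¹ * (y i - a i) = m := by
      rw [← Finset.mul_sum, Finset.sum_sub_distrib, hy]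
      rw [hm_def, hΔ_def]
      ring
    rw [hsum, ← Finset.mul_sum] at hj
    calc n * |m| ^ p ≤ n * (n⁻¹ * ∑ i ∈ F, |y i - a i| ^ p) := by
          apply mul_le_mul_of_nonneg_left hj hn.le
    _ = ∑ i ∈ F, |y i - a i| ^ p := by field_simp
  -- Part 2: minimality
  have part2 : ∀ y : I → ℝ, (∑ i ∈ F, y i = c) →
      (∑ i, |incrementalUpdate F a c i - a i| ^ p) ≤ ∑ i, |y i - a i| ^ p := by
    intro y hy
    rw [obj_star]
    calc n * |m| ^ p ≤ ∑ i ∈ F, |y i - a i| ^ p := key2 y hy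
    _ ≤ ∑ i, |y i - a i| ^ p :=
        Finset.sum_le_sum_of_subset_of_nonneg (Finset.subset_univ F)
          (fun i _ _ => by positivity)
  refine ⟨part1, part2, ?_⟩
  -- Part 3: uniqueness
  intro x hx hmin
  have hobj : (∑ i, |x i - a i| ^ p) ≤ n * |m| ^ p := by
    rw [← obj_star]; exact hmin _ part1
  have hsplit : (∑ i, |x i - a i| ^ p) =
      (∑ i ∈ F, |x i - a i| ^ p) + ∑ i ∈ Finset.univ \ F, |x i - a i| ^ p := by
    rw [add_comm, Finset.sum_sdiff (Finset.subset_univ F)]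
  have hFle := key2 x hx
  have hoff : ∀ i ∈ Finset.univ \ F, |x i - a i| ^ p = 0 := by
    have hz : ∑ i ∈ Finset.univ \ F, |x i - a i| ^ p = 0 := by
      have h1 : (0:ℝ) ≤ ∑ i ∈ Finset.univ \ F, |x i - a i| ^ p :=
        Finset.sum_nonneg fun i _ => by positivity
      linarith [hsplit ▸ hobj]
    intro i hi
    exact (Finset.sum_eq_zero_iff_of_nonneg (fun i _ => by positivity)).mp hz i hi
  have hxoff : ∀ i, i ∉ F → x i = a i := by
    intro i hi
    have := hoff i (Finset.mem_sdiff.mpr ⟨Finset.mem_univ i, hi⟩)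
    have h0 : |x i - a i| = 0 := by
      by_contra h
      have : 0 < |x i - a i| := lt_of_le_of_ne (abs_nonneg _) (Ne.symm h)
      exact absurd this.ne' (by
        intro _
        have := Real.rpow_pos_of_pos this p
        linarith)
    have := abs_eq_zero.mp h0
    linarith
  -- on F: Jensen equality case
  have hFeq : (∑ i ∈ F, |x i - a i| ^ p) ≤ n * |m| ^ p := by
    have h1 : (0:ℝ) ≤ ∑ i ∈ Finset.univ \ F, |x i - a i| ^ p :=
      Finset.sum_nonneg fun i _ => by positivity
    linarith [hsplit ▸ hobj]
  have hsum : ∑ i ∈ F, n⁻¹ * (x i - a i) = m := by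
    rw [← Finset.mul_sum, Finset.sum_sub_distrib, hx, hm_def, hΔ_def]
    ring
  have heqcase := (strictConvexOn_abs_rpow hp).eq_of_le_map_sum
    (t := F) (w := fun _ => n⁻¹) (p := fun i => x i - a i)
    (fun i _ => by positivity) hw1 (fun i _ => mem_univ _)
    (by
      simp only [smul_eq_mul]
      rw [hsum, ← Finset.mul_sum]
      calc n⁻¹ * ∑ i ∈ F, |x i - a i| ^ p ≤ n⁻¹ * (n * |m| ^ p) := by
            apply mul_le_mul_of_nonneg_left hFeq (by positivity)
      _ = |m| ^ p := by field_simp)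
  obtain ⟨j0, hj0⟩ := hF
  have hconst : ∀ i ∈ F, x i - a i = x j0 - a j0 := fun i hi => heqcase hi hj0
  have hval : x j0 - a j0 = m := by
    have : ∑ i ∈ F, (x i - a i) = n * (x j0 - a j0) := by
      rw [Finset.sum_congr rfl hconst, Finset.sum_const, nsmul_eq_mul]
    rw [Finset.sum_sub_distrib, hx] at this
    rw [hm_def, hΔ_def]
    field_simp
    linarith
  funext i
  by_cases hi : i ∈ F
  · have h2 := hconst i hi
    rw [hval] at h2
    have hm' : m = (c - ∑ j ∈ F, a j) / (F.card : ℝ) := rfl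
    rw [hm'] at h2
    simp only [incrementalUpdate, hi, if_true]
    linarith
  · simp only [incrementalUpdate, hi, if_false]
    exact hxoff i hi
end

section
/- Let I be a finite set, F ⊆ I a nonempty subset, a : I → ℝ, and c ∈ ℝ. Let Δ = c − ∑_{j ∈ F} a_j and define x* : I → ℝ by x*_i = a_i + Δ/|F| for i ∈ F and x*_i = a_i for i ∉ F. Then x* satisfies ∑_{i ∈ F} x*_i = c, every x : I → ℝ with ∑_{i ∈ F} x_i = c satisfies ∑_{i ∈ I} |x_i − a_i| ≥ |Δ|, and ∑_{i ∈ I} |x*_i − a_i| = |Δ|; hence x* is a minimizer of the ℓ₁ adjustment over this constraint set. -/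
/-- For a finite index set `I`, nonempty `F ⊆ I`, `a : I → ℝ` and
`c ∈ ℝ`, with `Δ = c − ∑_{j ∈ F} a j`, the equal-distribution update `x*` satisfies
the constraint `∑_{i ∈ F} x* i = c`, every feasible `x` has total ℓ₁ adjustment at
least `|Δ|`, and `x*` achieves exactly `|Δ|`; hence `x*` is an ℓ₁ minimizer. -/
theorem incremental_update_l1_minimizer
    {I : Type*} [Fintype I] [DecidableEq I]
    (F : Finset I) (hF : F.Nonempty) (a : I → ℝ) (c : ℝ) :
    (∑ i ∈ F, incrementalUpdate F a c i = c) ∧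
    (∀ x : I → ℝ, (∑ i ∈ F, x i = c) →
        |c - ∑ j ∈ F, a j| ≤ ∑ i, |x i - a i|) ∧
    (∑ i, |incrementalUpdate F a c i - a i| = |c - ∑ j ∈ F, a j|) := by
  have hcard : (F.card : ℝ) ≠ 0 := by
    exact_mod_cast (Finset.card_pos.mpr hF).ne'
  refine ⟨?_, ?_, ?_⟩
  · have : ∑ i ∈ F, incrementalUpdate F a c i
        = ∑ i ∈ F, (a i + (c - ∑ j ∈ F, a j) / F.card) :=
      Finset.sum_congr rfl fun i hi => by simp [incrementalUpdate, hi]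
    rw [this, Finset.sum_add_distrib, Finset.sum_const, nsmul_eq_mul]
    field_simp
    ring
  · intro x hx
    calc |c - ∑ j ∈ F, a j| = |∑ i ∈ F, (x i - a i)| := by
          rw [Finset.sum_sub_distrib, hx]
      _ ≤ ∑ i ∈ F, |x i - a i| := Finset.abs_sum_le_sum_abs _ _
      _ ≤ ∑ i, |x i - a i| :=
          Finset.sum_le_sum_of_subset_of_nonneg (Finset.subset_univ F)
            (fun i _ _ => abs_nonneg _)
  · rw [← Finset.sum_subset (Finset.subset_univ F)
      (fun i _ hi => by simp [incrementalUpdate, hi])]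
    have : ∑ i ∈ F, |incrementalUpdate F a c i - a i|
        = ∑ i ∈ F, |(c - ∑ j ∈ F, a j) / F.card| :=
      Finset.sum_congr rfl fun i hi => by simp [incrementalUpdate, hi]
    rw [this, Finset.sum_const, nsmul_eq_mul, abs_div]
    rw [abs_of_nonneg (by positivity : (0:ℝ) ≤ (F.card : ℝ))]
    field_simp
end
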